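/- Let γ, Φ : [0,1] → [0,∞) with γ continuous, c₂ ∈ (0,1] with γ(t) ≥ c₂‖γ‖ for t ∈ [a,b], let k : [0,1]×[0,1] → [0,∞) satisfy k(t,s) ≤ Φ(s) for all t ∈ [0,1] and k(t,s) ≥ c₁Φ(s) for t ∈ [a,b], where c₁ ∈ (0,1]. Suppose u : [0,1] → ℝ is given by u(t) = γ(t)·A + ∫₀¹ k(t,s) h(s) ds, where A ≥ 0 is a constant and h : [0,1] → [0,∞) is integrable. Then min_{t∈[a,b]} u(t) ≥ c·‖u‖ with c = min{c₁, c₂}, where ‖u‖ is the sup norm of u on [0,1]. -/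
import Mathlib


/-- Cone invariance: if `u(t) = γ(t)·A + ∫₀¹ k(t,s)h(s)ds` with `A ≥ 0`, `h ≥ 0`
integrable, `γ(t) ≥ c₂‖γ‖` on `[a,b]`, `c₁Φ(s) ≤ k(t,s) ≤ Φ(s)` appropriately, then
`min_{[a,b]} u ≥ c‖u‖` with `c = min{c₁,c₂}`. -/
theorem stmt4 (a b c₁ c₂ A : ℝ) (ha : 0 < a) (hab : a < b) (hb : b < 1)
    (hc₁ : c₁ ∈ Set.Ioc (0:ℝ) 1) (hc₂ : c₂ ∈ Set.Ioc (0:ℝ) 1) (hA : 0 ≤ A)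
    (γ Φ h : ℝ → ℝ) (k : ℝ → ℝ → ℝ) (u : ℝ → ℝ)
    (hγc : Continuous γ) (hγ0 : ∀ t ∈ Set.Icc (0:ℝ) 1, 0 ≤ γ t)
    (hΦ0 : ∀ s ∈ Set.Icc (0:ℝ) 1, 0 ≤ Φ s)
    (hγ : ∀ t ∈ Set.Icc a b, γ t ≥ c₂ * sSup ((fun t => |γ t|) '' Set.Icc (0:ℝ) 1))
    (hk0 : ∀ t ∈ Set.Icc (0:ℝ) 1, ∀ s ∈ Set.Icc (0:ℝ) 1, 0 ≤ k t s)
    (hkup : ∀ t ∈ Set.Icc (0:ℝ) 1, ∀ s ∈ Set.Icc (0:ℝ) 1, k t s ≤ Φ s)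
    (hklow : ∀ t ∈ Set.Icc a b, ∀ s ∈ Set.Icc (0:ℝ) 1, c₁ * Φ s ≤ k t s)
    (hh0 : ∀ s ∈ Set.Icc (0:ℝ) 1, 0 ≤ h s)
    (hhint : ∀ t ∈ Set.Icc (0:ℝ) 1,
      IntervalIntegrable (fun s => k t s * h s) MeasureTheory.volume 0 1)
    (hΦint : IntervalIntegrable (fun s => Φ s * h s) MeasureTheory.volume 0 1)
    (hu : ∀ t ∈ Set.Icc (0:ℝ) 1, u t = γ t * A + ∫ s in (0:ℝ)..1, k t s * h s) :
    ∀ t ∈ Set.Icc a b,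
      u t ≥ min c₁ c₂ * sSup ((fun t => |u t|) '' Set.Icc (0:ℝ) 1) := by
  intro t ht
  have hab01 : Set.Icc a b ⊆ Set.Icc (0:ℝ) 1 := Set.Icc_subset_Icc ha.le hb.le
  have ht01 : t ∈ Set.Icc (0:ℝ) 1 := hab01 ht
  set Mγ := sSup ((fun t => |γ t|) '' Set.Icc (0:ℝ) 1) with hMγdef
  have hbddγ : BddAbove ((fun t => |γ t|) '' Set.Icc (0:ℝ) 1) :=
    (isCompact_Icc.image hγc.abs).bddAbove
  have hγle : ∀ s ∈ Set.Icc (0:ℝ) 1, γ s ≤ Mγ := fun s hs =>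
    (le_abs_self _).trans (le_csSup hbddγ ⟨s, hs, rfl⟩)
  have hI : (0:ℝ) ≤ ∫ s in (0:ℝ)..1, Φ s * h s :=
    intervalIntegral.integral_nonneg zero_le_one
      (fun s hs => mul_nonneg (hΦ0 s hs) (hh0 s hs))
  have key : ∀ s ∈ Set.Icc (0:ℝ) 1,
      0 ≤ u s ∧ u s ≤ Mγ * A + ∫ x in (0:ℝ)..1, Φ x * h x := by
    intro s hs
    rw [hu s hs]
    constructor
    · have h1 : 0 ≤ γ s * A := mul_nonneg (hγ0 s hs) hA
      have h2 : 0 ≤ ∫ x in (0:ℝ)..1, k s x * h x :=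
        intervalIntegral.integral_nonneg zero_le_one
          (fun x hx => mul_nonneg (hk0 s hs x hx) (hh0 x hx))
      linarith
    · have h1 : γ s * A ≤ Mγ * A := mul_le_mul_of_nonneg_right (hγle s hs) hA
      have h2 : (∫ x in (0:ℝ)..1, k s x * h x) ≤ ∫ x in (0:ℝ)..1, Φ x * h x :=
        intervalIntegral.integral_mono_on zero_le_one (hhint s hs) hΦint
          (fun x hx => mul_le_mul_of_nonneg_right (hkup s hs x hx) (hh0 x hx))
      linarith
  have hMu : sSup ((fun t => |u t|) '' Set.Icc (0:ℝ) 1)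
      ≤ Mγ * A + ∫ x in (0:ℝ)..1, Φ x * h x := by
    apply csSup_le ((Set.nonempty_Icc.2 zero_le_one).image _)
    rintro x ⟨s, hs, rfl⟩
    show |u s| ≤ _
    rw [abs_of_nonneg (key s hs).1]
    exact (key s hs).2
  have hlow : c₂ * Mγ * A + c₁ * ∫ s in (0:ℝ)..1, Φ s * h s ≤ u t := by
    rw [hu t ht01]
    have h1 : c₂ * Mγ * A ≤ γ t * A := mul_le_mul_of_nonneg_right (hγ t ht) hA
    have h2 : (∫ s in (0:ℝ)..1, c₁ * (Φ s * h s)) ≤ ∫ s in (0:ℝ)..1, k t s * h s := by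
      apply intervalIntegral.integral_mono_on zero_le_one (hΦint.const_mul c₁) (hhint t ht01)
      intro x hx
      have := hklow t ht x hx
      nlinarith [hh0 x hx]
    rw [intervalIntegral.integral_const_mul] at h2
    linarith
  have hMγ0 : 0 ≤ Mγ :=
    le_trans (abs_nonneg (γ 0)) (le_csSup hbddγ ⟨0, Set.left_mem_Icc.2 zero_le_one, rfl⟩)
  have hm1 : min c₁ c₂ ≤ c₁ := min_le_left _ _
  have hm2 : min c₁ c₂ ≤ c₂ := min_le_right _ _
  have hm0 : 0 ≤ min c₁ c₂ := le_min hc₁.1.le hc₂.1.le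
  calc min c₁ c₂ * sSup ((fun t => |u t|) '' Set.Icc (0:ℝ) 1)
      ≤ min c₁ c₂ * (Mγ * A + ∫ x in (0:ℝ)..1, Φ x * h x) :=
        mul_le_mul_of_nonneg_left hMu hm0
    _ ≤ c₂ * Mγ * A + c₁ * ∫ x in (0:ℝ)..1, Φ x * h x := by
        nlinarith [mul_nonneg hMγ0 hA]
    _ ≤ u t := hlow
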